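/- Let m ∈ ℕ and let y = (y_0,…,y_m) ∈ ℕ^{m+1} satisfy y_i ≤ y_{i+1} for 0 ≤ i ≤ m−1 and y_i + 2 ≤ y_{i+2} for 0 ≤ i ≤ m−2. Then the set 𝔉(y) of maximal intervals [i,j] ⊆ [0,m] on which k ↦ y_k − k is constant (i.e., y_{i−1}−(i−1) < y_i−i = … = y_j−j < y_{j+1}−(j+1), with conventions y_{−1} = −∞, y_{m+1} = +∞) is empty if and only if m is odd and y_{2i} = y_{2i+1} for all 0 ≤ i ≤ (m−1)/2. -/
import Mathlib


open Finset

/-- `X_m`: sequences `(x_0,…,x_m)` in `ℕ` with `x i ≤ x (i+1)` and `x i < x (i+2)`. -/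
def IsX (m : ℕ) (x : ℕ → ℕ) : Prop :=
  (∀ i, i < m → x i ≤ x (i + 1)) ∧ (∀ i, i + 2 ≤ m → x i < x (i + 2))

/-- `Y_m`: sequences with `y i ≤ y (i+1)` and `y i + 2 ≤ y (i+2)`. -/
def IsY (m : ℕ) (y : ℕ → ℕ) : Prop :=
  (∀ i, i < m → y i ≤ y (i + 1)) ∧ (∀ i, i + 2 ≤ m → y i + 2 ≤ y (i + 2))

/-- `ℰ_m`: weakly increasing sequences. -/
def IsE (m : ℕ) (e : ℕ → ℕ) : Prop := ∀ i, i < m → e i ≤ e (i + 1)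

/-- `𝔖(x)`: indices `i ∈ [0,m]` with `x (i-1) < x i < x (i+1)`,
with conventions `x_{-1} = -∞`, `x_{m+1} = +∞`. -/
def SS (m : ℕ) (x : ℕ → ℕ) : Finset ℕ :=
  (Finset.range (m + 1)).filter
    (fun i => (i = 0 ∨ x (i - 1) < x i) ∧ (i = m ∨ x i < x (i + 1)))

/-- `𝔉(y)`: intervals `[i,j] ⊆ [0,m]` with
`y_{i-1}-(i-1) < y_i-i = ⋯ = y_j-j < y_{j+1}-(j+1)` (conventions `±∞` at the ends),
encoded as pairs `(i, j)`. -/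
def FF (m : ℕ) (y : ℕ → ℕ) : Finset (ℕ × ℕ) :=
  ((Finset.range (m + 1)) ×ˢ (Finset.range (m + 1))).filter
    (fun p => p.1 ≤ p.2 ∧
      (p.1 = 0 ∨ ((y (p.1 - 1) : ℤ) - ((p.1 : ℤ) - 1) < (y p.1 : ℤ) - (p.1 : ℤ))) ∧
      (p.2 = m ∨ ((y p.2 : ℤ) - (p.2 : ℤ) < (y (p.2 + 1) : ℤ) - ((p.2 : ℤ) + 1))) ∧
      (∀ k ∈ Finset.Ico p.1 p.2, ((y k : ℤ) - (k : ℤ) = (y (k + 1) : ℤ) - ((k : ℤ) + 1))))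

/-- `𝔉'(y)`: the intervals in `𝔉(y)` of odd cardinality. -/
def FF' (m : ℕ) (y : ℕ → ℕ) : Finset (ℕ × ℕ) :=
  (FF m y).filter (fun p => Odd (p.2 - p.1 + 1))

/-- `R(y)`: endpoints of intervals in `𝔉(y)`. -/
def RR (m : ℕ) (y : ℕ → ℕ) : Finset ℕ :=
  (Finset.range (m + 1)).filter (fun k => ∃ p ∈ FF m y, k = p.1 ∨ k = p.2)

/-- `R_0(y)`: those `k` with `[k,k] ∈ 𝔉(y)`. -/
def RR0 (m : ℕ) (y : ℕ → ℕ) : Finset ℕ :=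
  (Finset.range (m + 1)).filter (fun k => (k, k) ∈ FF m y)

/-- `S(y)`: pairs `(x, x') ∈ X_m × X_m` with `x + x' = y`,
`𝔖(x) ∪ 𝔖(x') = R(y)`, `𝔖(x) ∩ 𝔖(x') = R_0(y)`, and `𝔖(x') = ∅` if `𝔉'(y) = ∅`. -/
def IsS (m : ℕ) (y x x' : ℕ → ℕ) : Prop :=
  IsX m x ∧ IsX m x' ∧ (∀ i, i ≤ m → x i + x' i = y i) ∧
  SS m x ∪ SS m x' = RR m y ∧ SS m x ∩ SS m x' = RR0 m y ∧
  (FF' m y = ∅ → SS m x' = ∅)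

lemma mem_FF {m : ℕ} {y : ℕ → ℕ} {i j : ℕ} :
    (i, j) ∈ FF m y ↔ i ≤ j ∧ j ≤ m ∧
      (i = 0 ∨ ((y (i - 1) : ℤ) - ((i : ℤ) - 1) < (y i : ℤ) - (i : ℤ))) ∧
      (j = m ∨ ((y j : ℤ) - (j : ℤ) < (y (j + 1) : ℤ) - ((j : ℤ) + 1))) ∧
      (∀ k ∈ Finset.Ico i j, ((y k : ℤ) - (k : ℤ) = (y (k + 1) : ℤ) - ((k : ℤ) + 1))) := by
  simp only [FF, Finset.mem_filter, Finset.mem_product, Finset.mem_range]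
  constructor
  · rintro ⟨⟨h1, h2⟩, h3, h4, h5, h6⟩
    exact ⟨h3, by omega, h4, h5, h6⟩
  · rintro ⟨h1, h2, h3, h4, h5⟩
    exact ⟨⟨by omega, by omega⟩, h1, h3, h4, h5⟩

lemma run_lemma {m : ℕ} {y : ℕ → ℕ} (hy : IsY m y) (hF : FF m y = ∅) :
    ∀ n i k, m - k ≤ n → i ≤ k → k ≤ m →
      (i = 0 ∨ ((y (i - 1) : ℤ) - ((i : ℤ) - 1) < (y i : ℤ) - (i : ℤ))) →
      (∀ l ∈ Finset.Ico i k, ((y l : ℤ) - (l : ℤ) = (y (l + 1) : ℤ) - ((l : ℤ) + 1))) →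
      k < m ∧ (y (k + 1) : ℤ) - ((k : ℤ) + 1) < (y k : ℤ) - (k : ℤ) := by
  intro n
  induction n with
  | zero =>
    intro i k h1 h2 h3 hleft hconst
    have hmem : (i, k) ∉ FF m y := by rw [hF]; exact Finset.notMem_empty _
    rw [mem_FF] at hmem
    have hk : ¬ (k = m ∨ ((y k : ℤ) - (k : ℤ) < (y (k + 1) : ℤ) - ((k : ℤ) + 1))) :=
      fun h => hmem ⟨h2, h3, hleft, h, hconst⟩
    push_neg at hk
    omega
  | succ n ih =>
    intro i k h1 h2 h3 hleft hconst
    have hmem : (i, k) ∉ FF m y := by rw [hF]; exact Finset.notMem_empty _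
    rw [mem_FF] at hmem
    have hk : ¬ (k = m ∨ ((y k : ℤ) - (k : ℤ) < (y (k + 1) : ℤ) - ((k : ℤ) + 1))) :=
      fun h => hmem ⟨h2, h3, hleft, h, hconst⟩
    push_neg at hk
    obtain ⟨hkm, hle⟩ := hk
    have hkm' : k < m := by omega
    rcases lt_or_eq_of_le hle with hlt | heq
    · exact ⟨hkm', hlt⟩
    · have hres := ih i (k + 1) (by omega) (by omega) (by omega) hleft ?_
      · exfalso
        have hstep := hy.2 k (by omega)
        have e : k + 1 + 1 = k + 2 := rfl
        rw [e] at hres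
        omega
      · intro l hl
        rw [Finset.mem_Ico] at hl
        rcases Nat.lt_or_ge l k with h | h
        · exact hconst l (Finset.mem_Ico.mpr ⟨hl.1, h⟩)
        · have : l = k := by omega
          subst this
          omega

lemma evens_lemma {m : ℕ} {y : ℕ → ℕ} (hy : IsY m y) (hF : FF m y = ∅) :
    ∀ k, Even k → k ≤ m → k < m ∧ (y (k + 1) : ℤ) - ((k : ℤ) + 1) < (y k : ℤ) - (k : ℤ) := by
  intro k
  induction k using Nat.strong_induction_on with
  | _ k ih =>
    intro hev hkm
    have hleft : k = 0 ∨ ((y (k - 1) : ℤ) - ((k : ℤ) - 1) < (y k : ℤ) - (k : ℤ)) := by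
      rcases Nat.eq_zero_or_pos k with h0 | h0
      · exact Or.inl h0
      · right
        have hk2 : 2 ≤ k := by rcases hev with ⟨r, hr⟩; omega
        have h1 := ih (k - 2) (by omega)
          (by rcases hev with ⟨r, hr⟩; exact ⟨r - 1, by omega⟩) (by omega)
        have h2 := hy.2 (k - 2) (by omega)
        have e1 : k - 2 + 1 = k - 1 := by omega
        have e2 : k - 2 + 2 = k := by omega
        rw [e1] at h1
        rw [e2] at h2
        omega
    exact run_lemma hy hF m k k (by omega) le_rfl hkm hleft (by simp)

theorem stmt2 (m : ℕ) (y : ℕ → ℕ) (hy : IsY m y) :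
    FF m y = ∅ ↔ Odd m ∧ ∀ i ≤ (m - 1) / 2, y (2 * i) = y (2 * i + 1) := by
  constructor
  · intro hF
    have hodd : Odd m := by
      rcases Nat.even_or_odd m with he | ho
      · exact absurd (evens_lemma hy hF m he le_rfl).1 (lt_irrefl m)
      · exact ho
    refine ⟨hodd, fun i hi => ?_⟩
    have h2i : 2 * i ≤ m := by rcases hodd with ⟨r, hr⟩; omega
    have h := evens_lemma hy hF (2 * i) (even_two_mul i) h2i
    have hmono := hy.1 (2 * i) h.1
    omega
  · rintro ⟨hodd, heq⟩
    rw [Finset.eq_empty_iff_forall_notMem]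
    rintro ⟨i, j⟩ hij
    rw [mem_FF] at hij
    obtain ⟨h1, h2, h3, h4, h5⟩ := hij
    have heven : ∀ k, 2 * k < m → y (2 * k) = y (2 * k + 1) := by
      intro k hk
      exact heq k (by rcases hodd with ⟨r, hr⟩; omega)
    rcases Nat.even_or_odd i with hev | hod
    · have him : i < m := by
        rcases Nat.lt_or_ge i m with h | h
        · exact h
        · exfalso
          rcases hodd with ⟨r, hr⟩
          rcases hev with ⟨s, hs⟩
          omega
      have hy1 : y i = y (i + 1) := by
        rcases hev with ⟨s, hs⟩
        have h' := heven s (by omega)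
        have e : 2 * s = i := by omega
        rw [e] at h'
        exact h'
      rcases Nat.lt_or_ge i j with hlt | hge
      · have := h5 i (Finset.mem_Ico.mpr ⟨le_rfl, hlt⟩)
        omega
      · have hij' : i = j := by omega
        subst hij'
        rcases h4 with h4 | h4
        · omega
        · omega
    · rcases h3 with h3 | h3
      · rcases hod with ⟨s, hs⟩; omega
      · have hy1 : y (i - 1) = y i := by
          rcases hod with ⟨s, hs⟩
          have h' := heven s (by omega)
          have e1 : 2 * s = i - 1 := by omega
          have e2 : 2 * s + 1 = i := by omega
          rw [e1] at h'
          have e3 : i - 1 + 1 = i := by omega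
          rw [e3] at h'
          exact h'
        omega
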